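/- Let h_s(X) ~ Bernoulli(γ(X)) given X (independently of C given X). Then h_s is both strength-calibrated and distribution-matched: P(h_s=1) = P(C=1) and P(X ∈ B | h_s=1) = P(X ∈ B | C=1) for every measurable set B. Conversely, any (possibly stochastic) classifier h satisfying both properties must satisfy P(h=1 | X) = γ(X) almost surely. -/

import Mathlib

open MeasureTheory

lemma binary_setIntegral {Ω : Type*} [MeasurableSpace Ω] (P : Measure Ω)
    [IsFiniteMeasure P] (g : Ω → ℝ) (hg : Measurable g)
    (hbin : ∀ ω, g ω = 0 ∨ g ω = 1) (S : Set Ω) :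
    ∫ ω in S, g ω ∂P = (P (S ∩ {ω | g ω = 1})).toReal := by
  have hmeas : MeasurableSet {ω | g ω = 1} := hg (measurableSet_singleton 1)
  have hgi : g = Set.indicator {ω | g ω = 1} (fun _ => (1:ℝ)) := by
    funext ω
    rcases hbin ω with h0 | h1
    · simp [Set.indicator, h0, Set.mem_setOf_eq]
    · simp [Set.indicator, h1, Set.mem_setOf_eq]
  rw [hgi, setIntegral_indicator hmeas]
  simp
  rfl

/-- a stochastic classifier h_s with P(h_s = 1 | X) = γ(X) is both
strength-calibrated and distribution-matched; conversely, any binary classifier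
satisfying both properties has P(h = 1 | X) = γ(X) (expressed via set integrals). -/
theorem stochastic_classifier_calibrated_and_matched
    {Ω 𝓧 : Type*} [MeasurableSpace Ω] [MeasurableSpace 𝓧]
    (P : Measure Ω) [IsProbabilityMeasure P]
    (X : Ω → 𝓧) (hX : Measurable X)
    (γ : 𝓧 → ℝ) (hγ : Measurable γ) (hγ01 : ∀ x, γ x ∈ Set.Icc (0:ℝ) 1)
    (hμpos : 0 < ∫ ω, γ (X ω) ∂P)
    (C : Ω → ℝ) (hC : Measurable C) (hCbin : ∀ ω, C ω = 0 ∨ C ω = 1)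
    (hcond : ∀ B : Set 𝓧, MeasurableSet B →
      ∫ ω in X ⁻¹' B, C ω ∂P = ∫ ω in X ⁻¹' B, γ (X ω) ∂P)
    (hs : Ω → ℝ) (hhs : Measurable hs) (hhsbin : ∀ ω, hs ω = 0 ∨ hs ω = 1)
    (hhscond : ∀ B : Set 𝓧, MeasurableSet B →
      ∫ ω in X ⁻¹' B, hs ω ∂P = ∫ ω in X ⁻¹' B, γ (X ω) ∂P) :
    (P {ω | hs ω = 1} = P {ω | C ω = 1}
      ∧ ∀ B : Set 𝓧, MeasurableSet B →
          (P (X ⁻¹' B ∩ {ω | hs ω = 1})).toReal / (P {ω | hs ω = 1}).toReal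
            = (P (X ⁻¹' B ∩ {ω | C ω = 1})).toReal / (P {ω | C ω = 1}).toReal)
    ∧ (∀ h : Ω → ℝ, Measurable h → (∀ ω, h ω = 0 ∨ h ω = 1) →
        P {ω | h ω = 1} = P {ω | C ω = 1} →
        (∀ B : Set 𝓧, MeasurableSet B →
          (P (X ⁻¹' B ∩ {ω | h ω = 1})).toReal / (P {ω | h ω = 1}).toReal
            = (P (X ⁻¹' B ∩ {ω | C ω = 1})).toReal / (P {ω | C ω = 1}).toReal) →
        ∀ B : Set 𝓧, MeasurableSet B →
          ∫ ω in X ⁻¹' B, h ω ∂P = ∫ ω in X ⁻¹' B, γ (X ω) ∂P) := by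
  have key : ∀ (g : Ω → ℝ), Measurable g → (∀ ω, g ω = 0 ∨ g ω = 1) →
      (∀ B : Set 𝓧, MeasurableSet B →
        ∫ ω in X ⁻¹' B, g ω ∂P = ∫ ω in X ⁻¹' B, γ (X ω) ∂P) →
      ∀ B : Set 𝓧, MeasurableSet B →
        (P (X ⁻¹' B ∩ {ω | g ω = 1})).toReal = ∫ ω in X ⁻¹' B, γ (X ω) ∂P :=
    fun g hg hbin hcnd B hB => (binary_setIntegral P g hg hbin _).symm.trans (hcnd B hB)
  have hsB := key hs hhs hhsbin hhscond
  have hCB := key C hC hCbin hcond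
  have hne : ∀ (S : Set Ω), P S ≠ ⊤ := fun S => measure_ne_top P S
  have huniv : ∀ (f : Ω → ℝ), X ⁻¹' (Set.univ) ∩ {ω | f ω = 1} = {ω | f ω = 1} := by
    intro f; simp
  have hcal : P {ω | hs ω = 1} = P {ω | C ω = 1} := by
    have h1 := hsB Set.univ MeasurableSet.univ
    have h2 := hCB Set.univ MeasurableSet.univ
    rw [huniv] at h1 h2
    exact (ENNReal.toReal_eq_toReal_iff' (hne _) (hne _)).mp (h1.trans h2.symm)
  have hmatch : ∀ B : Set 𝓧, MeasurableSet B →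
      P (X ⁻¹' B ∩ {ω | hs ω = 1}) = P (X ⁻¹' B ∩ {ω | C ω = 1}) := by
    intro B hB
    exact (ENNReal.toReal_eq_toReal_iff' (hne _) (hne _)).mp ((hsB B hB).trans (hCB B hB).symm)
  -- positivity of P {C = 1}
  have hC1 : (P {ω | C ω = 1}).toReal = ∫ ω, γ (X ω) ∂P := by
    have := hCB Set.univ MeasurableSet.univ
    rw [huniv] at this
    simpa using this
  have hCpos : 0 < (P {ω | C ω = 1}).toReal := hC1 ▸ hμpos
  refine ⟨⟨hcal, fun B hB => by rw [hmatch B hB, hcal]⟩, ?_⟩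
  intro h hh hhbin hcal' hmatch' B hB
  have hnum : (P (X ⁻¹' B ∩ {ω | h ω = 1})).toReal
      = (P (X ⁻¹' B ∩ {ω | C ω = 1})).toReal := by
    have := hmatch' B hB
    rw [hcal'] at this
    exact (div_left_inj' (ne_of_gt hCpos)).mp this
  rw [binary_setIntegral P h hh hhbin, hnum, ← binary_setIntegral P C hC hCbin,
    hcond B hB]
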